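/- Let a > 0 and 0 < aδ < π. For n, m ∈ ℤ with n ≠ m, define b_k(x) = 1/(cosh(a(x+k)) + cos(aδ)) and d_k(x) = b_k(x) sinh(a(x+k)). Then 2 b_n b_m = −[cos(aδ)/(sinh²(a(m−n)/2) + sin²(aδ))](b_n + b_m) + [coth(a(n−m)/2)/(sinh²(a(m−n)/2) + sin²(aδ))](d_n − d_m). -/

import Mathlib

open Real

lemma frac_lem_aux (P Pv S C c σ Du Dv : ℝ) (hDu : Du ≠ 0) (hDv : Dv ≠ 0) (hS : S ≠ 0)
    (hnum : -(c*S)*(Dv+Du) - C*(P*Dv - Pv*Du) = 2*S*(S^2+σ^2)) :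
    2 * (1/Du) * (1/Dv) = -(c/(S^2+σ^2)) * (1/Du + 1/Dv)
      + (C / -S)/(S^2+σ^2) * (1/Du*P - 1/Dv*Pv) := by
  field_simp
  linear_combination -hnum

theorem stmt_10 (a δ x : ℝ) (ha : 0 < a) (hδ : 0 < δ) (haδ : a * δ < π)
    (n m : ℤ) (hnm : n ≠ m) :
    let b : ℤ → ℝ := fun k => 1 / (Real.cosh (a * (x + k)) + Real.cos (a * δ))
    let d : ℤ → ℝ := fun k => b k * Real.sinh (a * (x + k))
    2 * b n * b m =
      -(Real.cos (a * δ) / (Real.sinh (a * (m - n) / 2) ^ 2 + Real.sin (a * δ) ^ 2))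
          * (b n + b m)
      + (Real.cosh (a * (n - m) / 2) / Real.sinh (a * (n - m) / 2))
          / (Real.sinh (a * (m - n) / 2) ^ 2 + Real.sin (a * δ) ^ 2)
          * (d n - d m) := by
  intro b d
  simp only [b, d]
  -- positivity of cos (a*δ) + cosh
  have hcos : (-1 : ℝ) < Real.cos (a * δ) := by
    have h1 : Real.cos π < Real.cos (a * δ) :=
      Real.cos_lt_cos_of_nonneg_of_le_pi (le_of_lt (mul_pos ha hδ)) le_rfl haδ
    rwa [Real.cos_pi] at h1
  have hDu : Real.cosh (a * (x + (n : ℝ))) + Real.cos (a * δ) ≠ 0 := by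
    have := Real.one_le_cosh (a * (x + (n : ℝ)))
    intro h; linarith
  have hDv : Real.cosh (a * (x + (m : ℝ))) + Real.cos (a * δ) ≠ 0 := by
    have := Real.one_le_cosh (a * (x + (m : ℝ)))
    intro h; linarith
  have hs0 : a * ((m : ℝ) - (n : ℝ)) / 2 ≠ 0 := by
    have hmn : ((m : ℝ) - (n : ℝ)) ≠ 0 := by
      rw [sub_ne_zero]
      exact_mod_cast hnm.symm
    positivity
  have hS : Real.sinh (a * ((m : ℝ) - (n : ℝ)) / 2) ≠ 0 := by
    rw [ne_eq, Real.sinh_eq_zero]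
    exact hs0
  have hm : a * (x + (m : ℝ)) = a * (x + (n : ℝ)) + 2 * (a * ((m : ℝ) - (n : ℝ)) / 2) := by
    ring
  have hneg : a * ((n : ℝ) - (m : ℝ)) / 2 = -(a * ((m : ℝ) - (n : ℝ)) / 2) := by ring
  rw [hm] at hDv ⊢
  rw [hneg, Real.cosh_add, Real.sinh_add, Real.cosh_two_mul, Real.sinh_two_mul,
    Real.cosh_neg, Real.sinh_neg]
  rw [Real.cosh_add, Real.cosh_two_mul, Real.sinh_two_mul] at hDv
  refine frac_lem_aux _ _ _ _ _ _ _ _ hDu hDv hS ?_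
  have hQ := Real.cosh_sq (a * (x + (n : ℝ)))
  have hC := Real.cosh_sq (a * ((m : ℝ) - (n : ℝ)) / 2)
  have hσ := Real.sin_sq_add_cos_sq (a * δ)
  set P := Real.sinh (a * (x + (n : ℝ)))
  set Q := Real.cosh (a * (x + (n : ℝ)))
  set S := Real.sinh (a * ((m : ℝ) - (n : ℝ)) / 2)
  set C := Real.cosh (a * ((m : ℝ) - (n : ℝ)) / 2)
  linear_combination (2*S*C^2)*hQ + (2*S + (Real.cos (a*δ))*S*Q + (Real.cos (a*δ))*P*C)*hC - (2*S)*hσ
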